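/- Strict spectral radius bound for nonnegative irreducible matrices: let A be an N×N real matrix with nonnegative entries that is irreducible in the sense that for all indices i, j there exists k ≥ 1 with (A^k)_{ij} > 0. Let x ∈ ℝ^N with x ≥ 0 and x ≠ 0, and let c ∈ ℝ. Suppose (A x)_i ≤ c x_i for every i and (A x)_m < c x_m for at least one index m. Then every eigenvalue λ ∈ ℂ of A satisfies |λ| < c. -/

import Mathlib

open Matrix Finset

/-- Entries of powers of a nonnegative matrix are nonnegative. -/
lemma aux_pow_nonneg {N : ℕ} (A : Matrix (Fin N) (Fin N) ℝ)
    (hA : ∀ i j, 0 ≤ A i j) : ∀ k i j, 0 ≤ (A ^ k) i j := by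
  intro k
  induction k with
  | zero => intro i j; simp [Matrix.one_apply]; positivity
  | succ n ih =>
      intro i j
      rw [pow_succ, Matrix.mul_apply]
      exact Finset.sum_nonneg fun l _ => mul_nonneg (ih i l) (hA l j)

/-- Iterated subinvariance: if `A z ≤ c z` entrywise then `A^k z ≤ c^k z`. -/
lemma aux_iter {N : ℕ} (A : Matrix (Fin N) (Fin N) ℝ)
    (hA : ∀ i j, 0 ≤ A i j) (c : ℝ) (hc : 0 ≤ c) (z : Fin N → ℝ)
    (hz : ∀ i, (A.mulVec z) i ≤ c * z i) :
    ∀ k i, ((A ^ k).mulVec z) i ≤ c ^ k * z i := by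
  intro k
  induction k with
  | zero => intro i; simp [Matrix.one_mulVec]
  | succ n ih =>
      intro i
      have h1 : ((A ^ (n + 1)).mulVec z) i = (A.mulVec ((A ^ n).mulVec z)) i := by
        rw [pow_succ', Matrix.mulVec_mulVec]
      rw [h1]
      have h2 : (A.mulVec ((A ^ n).mulVec z)) i ≤ c ^ n * (A.mulVec z) i := by
        simp only [Matrix.mulVec, dotProduct]
        rw [Finset.mul_sum]
        refine Finset.sum_le_sum fun j _ => ?_
        calc A i j * ((A ^ n).mulVec z) j ≤ A i j * (c ^ n * z j) :=
              mul_le_mul_of_nonneg_left (ih j) (hA i j)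
          _ = c ^ n * (A i j * z j) := by ring
      calc (A.mulVec ((A ^ n).mulVec z)) i ≤ c ^ n * (A.mulVec z) i := h2
        _ ≤ c ^ n * (c * z i) := mul_le_mul_of_nonneg_left (hz i) (by positivity)
        _ = c ^ (n + 1) * z i := by ring

/-- Positivity: a nonzero nonnegative subinvariant vector of an irreducible
nonnegative matrix is everywhere positive. -/
lemma aux_pos {N : ℕ} (A : Matrix (Fin N) (Fin N) ℝ)
    (hA : ∀ i j, 0 ≤ A i j)
    (hirr : ∀ i j : Fin N, ∃ k : ℕ, 1 ≤ k ∧ 0 < (A ^ k) i j)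
    (c : ℝ) (hc : 0 ≤ c) (z : Fin N → ℝ) (hznn : ∀ i, 0 ≤ z i) (hz0 : z ≠ 0)
    (hz : ∀ i, (A.mulVec z) i ≤ c * z i) : ∀ j, 0 < z j := by
  intro j
  rcases (hznn j).lt_or_eq with h | h
  · exact h
  exfalso
  obtain ⟨i, hi⟩ : ∃ i, z i ≠ 0 := Function.ne_iff.mp hz0
  have hzi : 0 < z i := lt_of_le_of_ne (hznn i) (Ne.symm hi)
  obtain ⟨k, _, hk⟩ := hirr j i
  have hlb : (A ^ k) j i * z i ≤ ((A ^ k).mulVec z) j := by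
    simp only [Matrix.mulVec, dotProduct]
    exact Finset.single_le_sum
      (fun l _ => mul_nonneg (aux_pow_nonneg A hA k j l) (hznn l)) (Finset.mem_univ i)
  have hub := aux_iter A hA c hc z hz k j
  rw [← h] at hub
  simp only [mul_zero] at hub
  have : 0 < ((A ^ k).mulVec z) j := lt_of_lt_of_le (mul_pos hk hzi) hlb
  linarith

/-- Strict spectral radius bound for nonnegative irreducible matrices. -/
theorem spectral_radius_strict_bound
    (N : ℕ) (hN : 0 < N) (A : Matrix (Fin N) (Fin N) ℝ)
    (hA : ∀ i j, 0 ≤ A i j)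
    (hirr : ∀ i j : Fin N, ∃ k : ℕ, 1 ≤ k ∧ 0 < (A ^ k) i j)
    (x : Fin N → ℝ) (hx : ∀ i, 0 ≤ x i) (hx0 : x ≠ 0)
    (c : ℝ)
    (hle : ∀ i, (A.mulVec x) i ≤ c * x i)
    (hlt : ∃ m, (A.mulVec x) m < c * x m)
    (lam : ℂ) (hlam : ((A.map (Complex.ofReal)).charpoly).IsRoot lam) :
    ‖lam‖ < c := by
  obtain ⟨m, hm⟩ := hlt
  -- c > 0
  have hAx0 : 0 ≤ (A.mulVec x) m := by
    simp only [Matrix.mulVec, dotProduct]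
    exact Finset.sum_nonneg fun j _ => mul_nonneg (hA m j) (hx j)
  have hcxm : 0 < c * x m := lt_of_le_of_lt hAx0 hm
  have hc : 0 < c := by
    by_contra h
    push_neg at h
    nlinarith [hx m]
  -- x is everywhere positive
  have hxpos : ∀ j, 0 < x j := aux_pos A hA hirr c hc.le x hx hx0 hle
  -- extract eigenvector
  set B := A.map (Complex.ofReal) with hB
  obtain ⟨v, hv, hmv⟩ : ∃ v, v ≠ 0 ∧ B.mulVec v = lam • v := by
    have hdet : (Matrix.scalar (Fin N) lam - B).det = 0 := by
      have h := hlam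
      rw [Polynomial.IsRoot, Matrix.charpoly, _root_.eval_det, matPolyEquiv_charmatrix] at h
      simpa using h
    obtain ⟨v, hv, hmv⟩ := (Matrix.exists_mulVec_eq_zero_iff).2 hdet
    refine ⟨v, hv, ?_⟩
    have h1 : (Matrix.scalar (Fin N) lam).mulVec v - B.mulVec v = 0 := by
      rw [← Matrix.sub_mulVec]; exact hmv
    have h2 : (Matrix.scalar (Fin N) lam).mulVec v = lam • v := by
      ext i; simp [Matrix.scalar, Matrix.mulVec_diagonal]
    rw [h2] at h1
    exact (sub_eq_zero.mp h1).symm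
  -- y = |v|
  set y : Fin N → ℝ := fun i => ‖v i‖ with hy
  have hynn : ∀ i, 0 ≤ y i := fun i => norm_nonneg _
  have hy0 : y ≠ 0 := by
    intro h
    apply hv
    funext i
    have := congrFun h i
    simpa [hy] using this
  have hkey : ∀ i, ‖lam‖ * y i ≤ (A.mulVec y) i := by
    intro i
    have h1 : lam * v i = (B.mulVec v) i := by
      have := congrFun hmv i
      simp only [Pi.smul_apply, smul_eq_mul] at this
      exact this.symm
    calc ‖lam‖ * y i = ‖lam * v i‖ :=
          (norm_mul lam (v i)).symm
      _ = ‖(B.mulVec v) i‖ := by rw [h1]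
      _ ≤ ∑ j, ‖B i j * v j‖ := by
          simp only [Matrix.mulVec, dotProduct]
          exact norm_sum_le _ _
      _ = (A.mulVec y) i := by
          simp only [Matrix.mulVec, dotProduct, hB, Matrix.map_apply]
          refine Finset.sum_congr rfl fun j _ => ?_
          rw [norm_mul, Complex.norm_real, Real.norm_eq_abs, abs_of_nonneg (hA i j)]
  -- contradiction argument
  by_contra hcon
  push_neg at hcon
  have hcy : ∀ i, c * y i ≤ (A.mulVec y) i := fun i =>
    le_trans (mul_le_mul_of_nonneg_right hcon (hynn i)) (hkey i)
  -- s = max of y i / x i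
  haveI : Nonempty (Fin N) := ⟨⟨0, hN⟩⟩
  have hne : (Finset.univ : Finset (Fin N)).Nonempty := Finset.univ_nonempty
  obtain ⟨i0, _, hi0⟩ := Finset.exists_max_image Finset.univ (fun i => y i / x i) hne
  set s := y i0 / x i0 with hs
  have hle_s : ∀ j, y j ≤ s * x j := by
    intro j
    have := hi0 j (Finset.mem_univ j)
    calc y j = (y j / x j) * x j := (div_mul_cancel₀ (y j) (hxpos j).ne').symm
      _ ≤ s * x j := mul_le_mul_of_nonneg_right this (hxpos j).le
  have hspos : 0 < s := by
    obtain ⟨i, hi⟩ : ∃ i, y i ≠ 0 := Function.ne_iff.mp hy0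
    have hyi : 0 < y i := lt_of_le_of_ne (hynn i) (Ne.symm hi)
    have h1 : 0 < y i / x i := div_pos hyi (hxpos i)
    exact lt_of_lt_of_le h1 (hi0 i (Finset.mem_univ i))
  have hzi0 : y i0 = s * x i0 := (div_mul_cancel₀ (y i0) (hxpos i0).ne').symm
  -- z = s x - y
  set z : Fin N → ℝ := fun j => s * x j - y j with hz
  have hznn : ∀ j, 0 ≤ z j := fun j => sub_nonneg.mpr (hle_s j)
  have hAz : ∀ i, (A.mulVec z) i ≤ c * z i := by
    intro i
    have h1 : (A.mulVec z) i = s * (A.mulVec x) i - (A.mulVec y) i := by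
      simp only [hz, Matrix.mulVec, dotProduct, mul_sub, Finset.sum_sub_distrib,
        Finset.mul_sum]
      congr 1
      exact Finset.sum_congr rfl fun j _ => by ring
    rw [h1]
    have h2 : s * (A.mulVec x) i ≤ s * (c * x i) :=
      mul_le_mul_of_nonneg_left (hle i) hspos.le
    have h3 := hcy i
    simp only [hz]
    nlinarith
  by_cases hz0 : z = 0
  · -- then y = s x and the strict inequality at m gives a contradiction
    have hym : ∀ j, y j = s * x j := by
      intro j
      have := congrFun hz0 j
      simp only [hz, Pi.zero_apply] at this
      linarith
    have h1 : (A.mulVec y) m = s * (A.mulVec x) m := by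
      simp only [Matrix.mulVec, dotProduct, Finset.mul_sum]
      exact Finset.sum_congr rfl fun j _ => by rw [hym j]; ring
    have h2 := hcy m
    rw [h1, hym m] at h2
    nlinarith
  · have := aux_pos A hA hirr c hc.le z hznn hz0 hAz i0
    simp only [hz] at this
    linarith [hzi0]
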